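/- Let I = (f_0,...,f_k) ⊆ R = k[x_1,...,x_N] be an ideal generated by homogeneous polynomials all of degree r, and let 𝓡(I) = ⊕_{d≥0} I^d t^d be its Rees algebra, bigraded with deg(x_i) = (1,0) and elements of I^d t^d in w-degree d. Then for all i, j, d, the graded Betti number of I^d as an R-module satisfies β_{i, j+rd}(I^d) = dim_k Tor_i^S(S/M, 𝓡(I))_{(j,d)}, where S = k[x_1,...,x_N, w_0,...,w_k] presents 𝓡(I) and M = (x_1,...,x_N). -/

import Mathlib

open MvPolynomial

noncomputable section

namespace KoszulModel

variable (𝕜 : Type) [Field 𝕜] (σ : Type) [Fintype σ] [LinearOrder σ]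
  {ι : Type} [AddCommGroup ι]
  (V : ι → Type) [∀ a, AddCommGroup (V a)] [∀ a, Module 𝕜 (V a)]
  (δ : σ → ι)
  (Op : (s : σ) → (a : ι) → V a →ₗ[𝕜] V (a + δ s))

/-- transport along equality of degrees -/
def vcast {a b : ι} (h : a = b) : V a ≃ₗ[𝕜] V b := h ▸ LinearEquiv.refl 𝕜 (V a)

/-- The degree-`j` strand of the `i`-th term of the Koszul complex. -/
abbrev KSpace (i : ℕ) (j : ι) : Type :=
  ∀ S : {t : Finset σ // t.card = i}, V (j - ∑ s ∈ S.1, δ s)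

/-- Koszul differential. -/
def kd (i : ℕ) (j : ι) : KSpace σ V δ (i + 1) j →ₗ[𝕜] KSpace σ V δ i j where
  toFun f t := ∑ s : σ,
    if h : s ∈ t.1 then 0 else
      ((-1 : 𝕜) ^ (t.1.filter (· < s)).card) •
        vcast 𝕜 V (by rw [Finset.sum_insert h]; abel)
          (Op s (j - ∑ u ∈ insert s t.1, δ u)
            (f ⟨insert s t.1, by rw [Finset.card_insert_of_notMem h, t.2]⟩))
  map_add' f g := by
    funext t
    rw [Pi.add_apply, ← Finset.sum_add_distrib]
    refine Finset.sum_congr rfl fun s _ => ?_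
    by_cases h : s ∈ t.1
    · simp [h]
    · simp [h, Pi.add_apply, map_add, smul_add]
  map_smul' c f := by
    funext t
    rw [RingHom.id_apply, Pi.smul_apply, Finset.smul_sum]
    refine Finset.sum_congr rfl fun s _ => ?_
    by_cases h : s ∈ t.1
    · simp [h]
    · simp only [h, dite_false, Pi.smul_apply, map_smul]
      rw [smul_comm]

def kdOut : (i : ℕ) → (j : ι) → KSpace σ V δ i j →ₗ[𝕜] KSpace σ V δ (i - 1) j
  | 0, _ => 0
  | (i + 1), j => kd 𝕜 σ V δ Op i j

/-- The degree-`j` strand of the `i`-th Koszul homology: a model for `Tor_i`. -/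
abbrev torSpace (i : ℕ) (j : ι) : Type :=
  ↥(LinearMap.ker (kdOut 𝕜 σ V δ Op i j)) ⧸
    (LinearMap.range (kd 𝕜 σ V δ Op i j)).comap
      (LinearMap.ker (kdOut 𝕜 σ V δ Op i j)).subtype

/-- Graded Betti number: the dimension of the degree-`j` strand of `i`-th Koszul homology. -/
def betti (i : ℕ) (j : ι) : ℕ := Module.finrank 𝕜 (torSpace 𝕜 σ V δ Op i j)

variable (𝕜 : Type) [Field 𝕜] (n : ℕ)

/-- The degree-`(a + off)` homogeneous piece of an ideal `I`, as a `𝕜`-subspace. -/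
def idealPiece (I : Ideal (MvPolynomial (Fin n) 𝕜)) (off : ℕ) (a : ℤ) :
    Submodule 𝕜 (MvPolynomial (Fin n) 𝕜) :=
  if 0 ≤ a then
    (I.restrictScalars 𝕜) ⊓ (homogeneousSubmodule (Fin n) 𝕜 (a.toNat + off))
  else ⊥

/-- Multiplication by the variable `X s`, as a degree-one map on the pieces of `I`. -/
def idealMulX (I : Ideal (MvPolynomial (Fin n) 𝕜)) (off : ℕ) (s : Fin n) (a : ℤ) :
    ↥(idealPiece 𝕜 n I off a) →ₗ[𝕜] ↥(idealPiece 𝕜 n I off (a + 1)) where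
  toFun p := ⟨X s * p.1, by
    have hp := p.2
    by_cases ha : 0 ≤ a
    · simp only [idealPiece, if_pos ha] at hp
      simp only [idealPiece, if_pos (by omega : (0:ℤ) ≤ a + 1)]
      refine Submodule.mem_inf.2 ⟨?_, ?_⟩
      · exact Ideal.mul_mem_left _ _ (Submodule.mem_inf.1 hp).1
      · have h2 : (p.1 : MvPolynomial (Fin n) 𝕜).IsHomogeneous (a.toNat + off) :=
          (mem_homogeneousSubmodule _ _).1 (Submodule.mem_inf.1 hp).2
        have hx : (X s : MvPolynomial (Fin n) 𝕜).IsHomogeneous 1 := isHomogeneous_X _ _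
        have := hx.mul h2
        rw [mem_homogeneousSubmodule]
        convert this using 1
        omega
    · simp only [idealPiece, if_neg ha] at hp
      have : (p.1 : MvPolynomial (Fin n) 𝕜) = 0 := by simpa using hp
      rw [this, mul_zero]
      exact Submodule.zero_mem _⟩
  map_add' p q := by ext; simp [mul_add]
  map_smul' c p := by ext; simp [Algebra.mul_smul_comm]

/-- The graded Betti numbers `β_{i,j}(I)` of an ideal `I`,
computed as dimensions of the strands of the Koszul homology `Tor_i(𝕜, I)_j`. -/
def idealBetti (I : Ideal (MvPolynomial (Fin n) 𝕜)) (i j : ℕ) : ℕ :=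
  KoszulModel.betti 𝕜 (Fin n) (fun a => ↥(idealPiece 𝕜 n I 0 a)) (fun _ => (1 : ℤ))
    (fun s a => idealMulX 𝕜 n I 0 s a) i (j : ℤ)

/-- The bidegree-`(j, d)` piece of the Rees algebra `𝓡(I) = ⊕_d I^d t^d`:
elements `f t^d` with `f ∈ I^d` homogeneous of internal degree `j + r d`. -/
def reesPiece (I : Ideal (MvPolynomial (Fin n) 𝕜)) (r : ℕ) (jd : ℤ × ℤ) :
    Submodule 𝕜 (MvPolynomial (Fin n) 𝕜) :=
  if 0 ≤ jd.1 ∧ 0 ≤ jd.2 then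
    ((I ^ jd.2.toNat).restrictScalars 𝕜) ⊓
      (homogeneousSubmodule (Fin n) 𝕜 (jd.1.toNat + r * jd.2.toNat))
  else ⊥

/-- Multiplication by `X s` on the Rees algebra, of bidegree `(1,0)`. -/
def reesMulX (I : Ideal (MvPolynomial (Fin n) 𝕜)) (r : ℕ) (s : Fin n) (jd : ℤ × ℤ) :
    ↥(reesPiece 𝕜 n I r jd) →ₗ[𝕜] ↥(reesPiece 𝕜 n I r (jd + (1, 0))) where
  toFun p := ⟨X s * p.1, by
    have hp := p.2
    by_cases h : 0 ≤ jd.1 ∧ 0 ≤ jd.2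
    · simp only [reesPiece, if_pos h] at hp
      have hcond : (0:ℤ) ≤ (jd + (1,0)).1 ∧ (0:ℤ) ≤ (jd + (1,0)).2 := by
        constructor <;> simp <;> omega
      simp only [reesPiece, if_pos hcond]
      have hd : ((jd + (1,0)).2).toNat = jd.2.toNat := by simp
      refine Submodule.mem_inf.2 ⟨?_, ?_⟩
      · rw [Submodule.restrictScalars_mem, hd]
        exact Ideal.mul_mem_left _ _ (Submodule.mem_inf.1 hp).1
      have h2 := (mem_homogeneousSubmodule _ _).1 (Submodule.mem_inf.1 hp).2
      have hx : (X s : MvPolynomial (Fin n) 𝕜).IsHomogeneous 1 := isHomogeneous_X _ _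
      rw [mem_homogeneousSubmodule]
      have hj : ((jd + (1,0)).1).toNat = jd.1.toNat + 1 := by
        simp only [Prod.fst_add]; omega
      rw [hd, hj]
      convert hx.mul h2 using 1
      ring
    · simp only [reesPiece, if_neg h] at hp
      have : (p.1 : MvPolynomial (Fin n) 𝕜) = 0 := by simpa using hp
      rw [this, mul_zero]; exact Submodule.zero_mem _⟩
  map_add' p q := by ext; simp [mul_add]
  map_smul' c p := by ext; simp [Algebra.mul_smul_comm]

/-- Multiplication by `w_t`, i.e. by `f t ⋅ t`, on the Rees algebra, of bidegree `(0,1)`. -/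
def reesMulF (I : Ideal (MvPolynomial (Fin n) 𝕜)) (r : ℕ)
    (g : MvPolynomial (Fin n) 𝕜) (hgI : g ∈ I) (hgh : g.IsHomogeneous r) (jd : ℤ × ℤ) :
    ↥(reesPiece 𝕜 n I r jd) →ₗ[𝕜] ↥(reesPiece 𝕜 n I r (jd + (0, 1))) where
  toFun p := ⟨g * p.1, by
    have hp := p.2
    by_cases h : 0 ≤ jd.1 ∧ 0 ≤ jd.2
    · simp only [reesPiece, if_pos h] at hp
      have hcond : (0:ℤ) ≤ (jd + (0,1)).1 ∧ (0:ℤ) ≤ (jd + (0,1)).2 := by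
        constructor <;> simp <;> omega
      simp only [reesPiece, if_pos hcond]
      refine Submodule.mem_inf.2 ⟨?_, ?_⟩
      · have hd : ((jd + (0,1)).2).toNat = jd.2.toNat + 1 := by
          simp only [Prod.snd_add]; omega
        rw [Submodule.restrictScalars_mem, hd, pow_succ']
        exact Ideal.mul_mem_mul hgI (Submodule.mem_inf.1 hp).1
      · have h2 := (mem_homogeneousSubmodule _ _).1 (Submodule.mem_inf.1 hp).2
        rw [mem_homogeneousSubmodule]
        have hd : ((jd + (0,1)).2).toNat = jd.2.toNat + 1 := by
          simp only [Prod.snd_add]; omega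
        have hj : ((jd + (0,1)).1).toNat = jd.1.toNat := by simp
        rw [hd, hj]
        convert hgh.mul h2 using 1
        ring
    · simp only [reesPiece, if_neg h] at hp
      have : (p.1 : MvPolynomial (Fin n) 𝕜) = 0 := by simpa using hp
      rw [this, mul_zero]; exact Submodule.zero_mem _⟩
  map_add' p q := by ext; simp [mul_add]
  map_smul' c p := by ext; simp [Algebra.mul_smul_comm]

/-- degree function on `Fin N ⊕ Fin (k+1)`: `x`-variables have bidegree `(1,0)`,
`w`-variables bidegree `(0,1)`. -/
def reesDeg (N k : ℕ) : Fin N ⊕ Fin (k + 1) → ℤ × ℤ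
  | .inl _ => (1, 0)
  | .inr _ => (0, 1)

/-- The action of the variables of `S = 𝕜[x, w]` on the Rees algebra:
`x_s` acts by multiplication, `w_t` acts by multiplication by `f t`. -/
def reesOp (k : ℕ) (I : Ideal (MvPolynomial (Fin n) 𝕜)) (r : ℕ)
    (f : Fin (k + 1) → MvPolynomial (Fin n) 𝕜) (hfI : ∀ t, f t ∈ I)
    (hfh : ∀ t, (f t).IsHomogeneous r) :
    (s : Fin n ⊕ Fin (k + 1)) → (jd : ℤ × ℤ) →
      ↥(reesPiece 𝕜 n I r jd) →ₗ[𝕜] ↥(reesPiece 𝕜 n I r (jd + reesDeg n k s))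
  | .inl s => reesMulX 𝕜 n I r s
  | .inr t => reesMulF 𝕜 n I r (f t) (hfI t) (hfh t)

/-- The bigraded Betti numbers `β_{i,(j,m)}(𝓡(I)) = dim Tor_i^S(𝕜, 𝓡(I))_{(j,m)}` of the
Rees algebra over `S = 𝕜[x_1,…,x_N,w_0,…,w_k]`, via the Koszul complex on all variables. -/
def reesBetti (k : ℕ) (I : Ideal (MvPolynomial (Fin n) 𝕜)) (r : ℕ)
    (f : Fin (k + 1) → MvPolynomial (Fin n) 𝕜) (hfI : ∀ t, f t ∈ I)
    (hfh : ∀ t, (f t).IsHomogeneous r) (i : ℕ) (jm : ℤ × ℤ) : ℕ :=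
  KoszulModel.betti 𝕜 (Fin n ⊕ₗ Fin (k + 1)) (fun jd => ↥(reesPiece 𝕜 n I r jd))
    (fun s => reesDeg n k (ofLex s))
    (fun s => reesOp 𝕜 n k I r f hfI hfh (ofLex s)) i jm

/-- A model for the bigraded module `Tor_i^S(S/M, 𝓡(I))_{(j,d)}`, `M = (x_1,…,x_N)`:
the `(j,d)`-strand of the homology of the Koszul complex on the `x`-variables
(which resolve `S/M` over `S`) with coefficients in the Rees algebra. -/
abbrev reesTorSM (I : Ideal (MvPolynomial (Fin n) 𝕜)) (r : ℕ) (i : ℕ) (jd : ℤ × ℤ) : Type :=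
  KoszulModel.torSpace 𝕜 (Fin n) (fun jd => ↥(reesPiece 𝕜 n I r jd))
    (fun _ => ((1 : ℤ), (0 : ℤ))) (fun s => reesMulX 𝕜 n I r s) i jd

/-- `dim_𝕜 Tor_i^S(S/M, 𝓡(I))_{(j,d)}`. -/
def reesTorSMDim (I : Ideal (MvPolynomial (Fin n) 𝕜)) (r : ℕ) (i : ℕ) (jd : ℤ × ℤ) : ℕ :=
  Module.finrank 𝕜 (reesTorSM 𝕜 n I r i jd)

/-- A model for `Tor_i^R(𝕜, I)_j` for an ideal `I ⊆ R`: Koszul homology. -/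
abbrev idealTor (I : Ideal (MvPolynomial (Fin n) 𝕜)) (i : ℕ) (j : ℤ) : Type :=
  KoszulModel.torSpace 𝕜 (Fin n) (fun a => ↥(idealPiece 𝕜 n I 0 a)) (fun _ => (1 : ℤ))
    (fun s a => idealMulX 𝕜 n I 0 s a) i j

end KoszulModel

section Aux

theorem finrank_homology_congr {𝕜 : Type} [Field 𝕜]
    {M N P M' N' P' : Type}
    [AddCommGroup M] [Module 𝕜 M] [AddCommGroup N] [Module 𝕜 N] [AddCommGroup P] [Module 𝕜 P]
    [AddCommGroup M'] [Module 𝕜 M'] [AddCommGroup N'] [Module 𝕜 N'] [AddCommGroup P'] [Module 𝕜 P']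
    (f : M →ₗ[𝕜] N) (g : N →ₗ[𝕜] P) (f' : M' →ₗ[𝕜] N') (g' : N' →ₗ[𝕜] P')
    (eM : M ≃ₗ[𝕜] M') (eN : N ≃ₗ[𝕜] N') (eP : P ≃ₗ[𝕜] P')
    (hf : ∀ x, eN (f x) = f' (eM x)) (hg : ∀ y, eP (g y) = g' (eN y)) :
    Module.finrank 𝕜 (↥(LinearMap.ker g) ⧸
        (LinearMap.range f).comap (LinearMap.ker g).subtype)
      = Module.finrank 𝕜 (↥(LinearMap.ker g') ⧸
        (LinearMap.range f').comap (LinearMap.ker g').subtype) := by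
  have hker : (LinearMap.ker g).map eN.toLinearMap = LinearMap.ker g' := by
    ext y
    constructor
    · rintro ⟨x, hx, rfl⟩
      simp only [LinearMap.mem_ker] at hx ⊢
      rw [LinearEquiv.coe_coe, ← hg, hx, map_zero]
    · intro hy
      refine ⟨eN.symm y, ?_, by simp⟩
      have := hg (eN.symm y)
      rw [LinearEquiv.apply_symm_apply] at this
      simp only [LinearMap.mem_ker] at hy ⊢
      apply eP.injective
      rw [this, hy, map_zero]
  let eK : ↥(LinearMap.ker g) ≃ₗ[𝕜] ↥(LinearMap.ker g') :=
    (eN.submoduleMap (LinearMap.ker g)).trans (LinearEquiv.ofEq _ _ hker)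
  have him : ((LinearMap.range f).comap (LinearMap.ker g).subtype).map eK.toLinearMap
      = (LinearMap.range f').comap (LinearMap.ker g').subtype := by
    ext y
    constructor
    · rintro ⟨x, hx, rfl⟩
      obtain ⟨m, hm⟩ := hx
      simp only [Submodule.mem_comap, LinearMap.mem_range]
      refine ⟨eM m, ?_⟩
      rw [← hf, hm]
      rfl
    · rintro ⟨m', hm'⟩
      refine ⟨eK.symm y, ?_, by simp⟩
      simp only [SetLike.mem_coe, Submodule.mem_comap, LinearMap.mem_range]
      refine ⟨eM.symm m', ?_⟩
      apply eN.injective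
      rw [hf, LinearEquiv.apply_symm_apply, hm']
      have heK : ∀ x : LinearMap.ker g, ((eK x : N')) = eN (x : N) := fun x => rfl
      have : (eK.symm y : N) = eN.symm (y : N') := by
        apply eN.injective
        rw [LinearEquiv.apply_symm_apply, ← heK, LinearEquiv.apply_symm_apply]
      show (y : N') = eN ((eK.symm y : N))
      rw [this, LinearEquiv.apply_symm_apply]
  exact (Submodule.Quotient.equiv _ _ eK him).finrank_eq

namespace KoszulModel

theorem betti_congr {𝕜 : Type} [Field 𝕜] {σ : Type} [Fintype σ] [LinearOrder σ]
    {ι : Type} [AddCommGroup ι] (V : ι → Type) [∀ a, AddCommGroup (V a)] [∀ a, Module 𝕜 (V a)]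
    (δ : σ → ι) (Op : (s : σ) → (a : ι) → V a →ₗ[𝕜] V (a + δ s))
    {ι' : Type} [AddCommGroup ι'] (V' : ι' → Type) [∀ a, AddCommGroup (V' a)]
    [∀ a, Module 𝕜 (V' a)]
    (δ' : σ → ι') (Op' : (s : σ) → (a : ι') → V' a →ₗ[𝕜] V' (a + δ' s))
    (j : ι) (j' : ι')
    (e : (t : Finset σ) → V (j - ∑ s ∈ t, δ s) ≃ₗ[𝕜] V' (j' - ∑ s ∈ t, δ' s))
    (hcomm : ∀ (t : Finset σ) (s : σ) (hs : s ∉ t) (x : V (j - ∑ u ∈ insert s t, δ u))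
      (h1 : (j - ∑ u ∈ insert s t, δ u) + δ s = j - ∑ u ∈ t, δ u)
      (h2 : (j' - ∑ u ∈ insert s t, δ' u) + δ' s = j' - ∑ u ∈ t, δ' u),
      e t (vcast 𝕜 V h1 (Op s _ x)) = vcast 𝕜 V' h2 (Op' s _ (e (insert s t) x)))
    (i : ℕ) : betti 𝕜 σ V δ Op i j = betti 𝕜 σ V' δ' Op' i j' := by
  let E : ∀ m : ℕ, KSpace σ V δ m j ≃ₗ[𝕜] KSpace σ V' δ' m j' := fun m =>
    LinearEquiv.piCongrRight (fun S => e S.1)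
  have hkd : ∀ (m : ℕ) (f : KSpace σ V δ (m + 1) j),
      E m (kd 𝕜 σ V δ Op m j f) = kd 𝕜 σ V' δ' Op' m j' (E (m + 1) f) := by
    intro m f
    funext t
    show e t.1 (kd 𝕜 σ V δ Op m j f t) = _
    simp only [kd, LinearMap.coe_mk, AddHom.coe_mk]
    rw [map_sum]
    refine Finset.sum_congr rfl fun s _ => ?_
    by_cases h : s ∈ t.1
    · simp [h]
    · simp only [h, dite_false, map_smul]
      congr 1
      exact hcomm t.1 s h _ _ _
  have hg : ∀ (y : KSpace σ V δ i j),
      E (i - 1) (kdOut 𝕜 σ V δ Op i j y) = kdOut 𝕜 σ V' δ' Op' i j' (E i y) := by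
    cases i with
    | zero => intro y; show E 0 ((0 : _ →ₗ[𝕜] _) y) = (0 : _ →ₗ[𝕜] _) (E 0 y); simp
    | succ m => exact fun y => hkd m y
  exact finrank_homology_congr (kd 𝕜 σ V δ Op i j) (kdOut 𝕜 σ V δ Op i j)
    (kd 𝕜 σ V' δ' Op' i j') (kdOut 𝕜 σ V' δ' Op' i j')
    (E (i + 1)) (E i) (E (i - 1)) (hkd i) hg

theorem coe_vcast {𝕜 : Type} [Field 𝕜] {ι : Type} [AddCommGroup ι] {W : Type} [AddCommGroup W]
    [Module 𝕜 W] (P : ι → Submodule 𝕜 W) {a b : ι} (h : a = b) (x : ↥(P a)) :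
    ((vcast 𝕜 (fun a => ↥(P a)) h x : ↥(P b)) : W) = (x : W) := by
  subst h; rfl

end KoszulModel

open Finsupp MvPolynomial in
/-- The ideal of polynomials all of whose monomials have degree at least `c`. -/
def lowDeg (𝕜 : Type) [Field 𝕜] (N : ℕ) (c : ℕ) : Ideal (MvPolynomial (Fin N) 𝕜) where
  carrier := {p | ∀ u : Fin N →₀ ℕ, coeff u p ≠ 0 → c ≤ Finsupp.weight (1 : Fin N → ℕ) u}
  add_mem' := by
    intro a b ha hb u hu
    rw [coeff_add] at hu
    by_cases h : coeff u a = 0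
    · exact hb u (by rwa [h, zero_add] at hu)
    · exact ha u h
  zero_mem' := by intro u hu; simp at hu
  smul_mem' := by
    intro q p hp u hu
    rw [smul_eq_mul, coeff_mul] at hu
    obtain ⟨x, hx, hne⟩ := Finset.exists_ne_zero_of_sum_ne_zero hu
    rw [Finset.HasAntidiagonal.mem_antidiagonal] at hx
    have h2 : coeff x.2 p ≠ 0 := fun h => hne (by simp [h])
    calc c ≤ Finsupp.weight (1 : Fin N → ℕ) x.2 := hp x.2 h2
    _ ≤ _ := by rw [← hx, map_add]; exact Nat.le_add_left _ _

open MvPolynomial in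
theorem mul_mem_lowDeg {𝕜 : Type} [Field 𝕜] {N : ℕ} {c₁ c₂ : ℕ} {p q : MvPolynomial (Fin N) 𝕜}
    (hp : p ∈ lowDeg 𝕜 N c₁) (hq : q ∈ lowDeg 𝕜 N c₂) : p * q ∈ lowDeg 𝕜 N (c₁ + c₂) := by
  intro u hu
  rw [coeff_mul] at hu
  obtain ⟨x, hx, hne⟩ := Finset.exists_ne_zero_of_sum_ne_zero hu
  rw [Finset.HasAntidiagonal.mem_antidiagonal] at hx
  have h1 : coeff x.1 p ≠ 0 := fun h => hne (by simp [h])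
  have h2 : coeff x.2 q ≠ 0 := fun h => hne (by simp [h])
  rw [← hx, map_add]
  exact Nat.add_le_add (hp x.1 h1) (hq x.2 h2)

theorem pow_le_lowDeg {𝕜 : Type} [Field 𝕜] {N : ℕ} {r : ℕ} {I : Ideal (MvPolynomial (Fin N) 𝕜)}
    (hIr : I ≤ lowDeg 𝕜 N r) (d : ℕ) : I ^ d ≤ lowDeg 𝕜 N (r * d) := by
  induction d with
  | zero => intro p _ u _; simp
  | succ d ih =>
    rw [pow_succ]
    refine Ideal.mul_le.2 fun p hp q hq => ?_
    have := mul_mem_lowDeg (ih hp) (hIr hq)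
    rwa [show r * d + r = r * (d + 1) by ring] at this

open MvPolynomial in
theorem eq_zero_of_mem_pow {𝕜 : Type} [Field 𝕜] {N r k d m : ℕ}
    {I : Ideal (MvPolynomial (Fin N) 𝕜)}
    {f : Fin (k + 1) → MvPolynomial (Fin N) 𝕜} (hfh : ∀ t, (f t).IsHomogeneous r)
    (hI : I = Ideal.span (Set.range f)) {p : MvPolynomial (Fin N) 𝕜}
    (hp : p ∈ I ^ d) (hph : p.IsHomogeneous m) (hm : m < r * d) : p = 0 := by
  have hspan : Ideal.span (Set.range f) ≤ lowDeg 𝕜 N r := by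
    rw [Ideal.span_le]
    rintro - ⟨t, rfl⟩ u hu
    exact le_of_eq (hfh t hu).symm
  have hle : I ^ d ≤ lowDeg 𝕜 N (r * d) := pow_le_lowDeg (hI ▸ hspan) d
  ext u
  rw [coeff_zero]
  by_contra hu
  have h1 := hle hp u hu
  have h2 := hph hu
  rw [h2] at h1
  omega

open KoszulModel MvPolynomial in
theorem piece_eq_reesPiece {𝕜 : Type} [Field 𝕜] {N r k d : ℕ}
    {I : Ideal (MvPolynomial (Fin N) 𝕜)}
    {f : Fin (k + 1) → MvPolynomial (Fin N) 𝕜} (hfh : ∀ t, (f t).IsHomogeneous r)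
    (hI : I = Ideal.span (Set.range f)) (a : ℤ) :
    idealPiece 𝕜 N (I ^ d) 0 a = reesPiece 𝕜 N I r (a - r * d, (d : ℤ)) := by
  have hrd : ((r * d : ℕ) : ℤ) = (r : ℤ) * d := by push_cast; ring
  by_cases ha : 0 ≤ a
  · by_cases hb : (r : ℤ) * d ≤ a
    · rw [idealPiece, if_pos ha, reesPiece,
        if_pos (⟨sub_nonneg.mpr hb, by positivity⟩ : (0:ℤ) ≤ a - r*d ∧ (0:ℤ) ≤ (d:ℤ))]
      have key : ∀ c : ℕ, ((c:ℤ) ≤ a) → a.toNat + 0 = (a - (c:ℤ)).toNat + c := by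
        intro c hc; omega
      have hnat : a.toNat + 0 = (a - (r:ℤ) * d).toNat + r * d := by
        have := key (r * d) (by rw [hrd]; exact hb)
        rwa [hrd] at this
      show (I ^ d).restrictScalars 𝕜 ⊓ homogeneousSubmodule (Fin N) 𝕜 (a.toNat + 0)
          = (I ^ ((d:ℤ)).toNat).restrictScalars 𝕜
            ⊓ homogeneousSubmodule (Fin N) 𝕜 ((a - (r:ℤ) * d).toNat + r * ((d:ℤ)).toNat)
      rw [Int.toNat_natCast, hnat]
    · rw [idealPiece, if_pos ha, reesPiece,
        if_neg (fun hc => hb (sub_nonneg.mp hc.1))]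
      rw [eq_bot_iff]
      intro p hp
      obtain ⟨hpI, hph⟩ := Submodule.mem_inf.1 hp
      have hlt : a.toNat + 0 < r * d := by
        have key : ∀ c : ℕ, 0 ≤ a → ¬((c:ℤ) ≤ a) → a.toNat + 0 < c := by
          intro c h1 h2; omega
        exact key (r * d) ha (by rw [hrd]; exact hb)
      have := eq_zero_of_mem_pow hfh hI hpI ((mem_homogeneousSubmodule _ _).1 hph) hlt
      simp [this]
  · rw [idealPiece, if_neg ha, reesPiece,
      if_neg (fun hc => ha (le_trans (by positivity : (0:ℤ) ≤ (r:ℤ) * d)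
        (sub_nonneg.mp hc.1)))]

open KoszulModel

/-- For `I = (f_0,…,f_k) ⊆ R = 𝕜[x_1,…,x_N]` equigenerated in degree `r`,
`β_{i, j+rd}(I^d) = dim_𝕜 Tor_i^S(S/M, 𝓡(I))_{(j,d)}` for all `i, j, d`, where
`S = 𝕜[x, w]` presents the bigraded Rees algebra `𝓡(I)` and `M = (x_1,…,x_N)`. -/
theorem betti_of_power_eq_rees_tor_dim (𝕜 : Type) [Field 𝕜] (N k r : ℕ)
    (I : Ideal (MvPolynomial (Fin N) 𝕜)) (f : Fin (k + 1) → MvPolynomial (Fin N) 𝕜)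
    (hfh : ∀ t, (f t).IsHomogeneous r) (hI : I = Ideal.span (Set.range f)) :
    ∀ (i j d : ℕ),
      idealBetti 𝕜 N (I ^ d) i (j + r * d) = reesTorSMDim 𝕜 N I r i ((j : ℤ), (d : ℤ)) := by
  intro i j d
  have hpiece : ∀ t : Finset (Fin N),
      idealPiece 𝕜 N (I ^ d) 0 (((j + r * d : ℕ) : ℤ) - ∑ _s ∈ t, (1 : ℤ))
        = reesPiece 𝕜 N I r (((j : ℤ), (d : ℤ)) - ∑ _s ∈ t, ((1 : ℤ), (0 : ℤ))) := by
    intro t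
    rw [piece_eq_reesPiece hfh hI]
    congr 1
    have hs1 : (∑ _s ∈ t, (1 : ℤ)) = (t.card : ℤ) := by simp
    have hs2 : (∑ _s ∈ t, ((1 : ℤ), (0 : ℤ))) = ((t.card : ℤ), (0 : ℤ)) := by
      rw [Finset.sum_const]
      ext <;> simp
    have hpair : (((j:ℤ), (d:ℤ)) - ((t.card : ℤ), (0:ℤ))) = ((j:ℤ) - t.card, (d:ℤ)) := by
      ext <;> simp
    rw [hs1, hs2, hpair, Prod.ext_iff]
    exact ⟨by push_cast; ring, rfl⟩
  let e : (t : Finset (Fin N)) →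
      ↥(idealPiece 𝕜 N (I ^ d) 0 (((j + r * d : ℕ) : ℤ) - ∑ _s ∈ t, (1 : ℤ)))
        ≃ₗ[𝕜] ↥(reesPiece 𝕜 N I r (((j : ℤ), (d : ℤ)) - ∑ _s ∈ t, ((1 : ℤ), (0 : ℤ)))) :=
    fun t => LinearEquiv.ofEq _ _ (hpiece t)
  show betti 𝕜 (Fin N) (fun a => ↥(idealPiece 𝕜 N (I ^ d) 0 a)) (fun _ => (1 : ℤ))
      (fun s a => idealMulX 𝕜 N (I ^ d) 0 s a) i ((j + r * d : ℕ) : ℤ)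
    = betti 𝕜 (Fin N) (fun jd => ↥(reesPiece 𝕜 N I r jd))
      (fun _ => ((1 : ℤ), (0 : ℤ))) (fun s => reesMulX 𝕜 N I r s) i ((j : ℤ), (d : ℤ))
  refine betti_congr _ _ _ _ _ _ _ _ e ?_ i
  intro t s hs x h1 h2
  apply Subtype.ext
  show ((e t) (vcast 𝕜 (fun a => ↥(idealPiece 𝕜 N (I ^ d) 0 a)) h1
      (idealMulX 𝕜 N (I ^ d) 0 s _ x)) : MvPolynomial (Fin N) 𝕜) = _
  rw [LinearEquiv.coe_ofEq_apply,
    coe_vcast (fun a => idealPiece 𝕜 N (I ^ d) 0 a) h1,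
    coe_vcast (fun jd => reesPiece 𝕜 N I r jd) h2]
  rfl
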